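/- Let T = Ω(λ₁,α₁,h₁) ⊗ ⋯ ⊗ Ω(λ_m,α_m,h_m) ⊗ V with λ₁, …, λ_m pairwise distinct nonzero complex numbers, α_k ∈ ℂ*, and V a simple restricted W(2,2)-module. Then for any nonzero v ∈ V, the element 1 ⊗ ⋯ ⊗ 1 ⊗ v generates T as a W(2,2)-module. -/

import Mathlib

open Polynomial TensorProduct

/-- Basis index set for the W-algebra W(2,2): elements `L n`, `W n` (n ∈ ℤ) and a central `C`. -/
inductive WIdx : Type
  | L : ℤ → WIdx
  | W : ℤ → WIdx
  | C : WIdx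

/-- The central-term coefficient δ_{m+n,0}·(m³−m)/12. -/
noncomputable def deltaC (m n : ℤ) : ℂ := if m + n = 0 then ((m : ℂ)^3 - (m : ℂ))/12 else 0

/-- A representation of the W-algebra W(2,2) on a complex vector space `M`,
given by operators for each basis element satisfying the bracket relations. -/
structure WRep (M : Type*) [AddCommGroup M] [Module ℂ M] where
  ρ : WIdx → Module.End ℂ M
  rel_LL : ∀ m n : ℤ, ρ (.L m) * ρ (.L n) - ρ (.L n) * ρ (.L m)
      = ((n : ℂ) - (m : ℂ)) • ρ (.L (m + n)) + deltaC m n • ρ .C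
  rel_LW : ∀ m n : ℤ, ρ (.L m) * ρ (.W n) - ρ (.W n) * ρ (.L m)
      = ((n : ℂ) - (m : ℂ)) • ρ (.W (m + n)) + deltaC m n • ρ .C
  rel_WW : ∀ m n : ℤ, ρ (.W m) * ρ (.W n) = ρ (.W n) * ρ (.W m)
  rel_C : ∀ x, ρ .C * ρ x = ρ x * ρ .C

/-- A subspace invariant under all the operators of a representation. -/
def WInvariant {M : Type*} [AddCommGroup M] [Module ℂ M]
    (ρ : WIdx → Module.End ℂ M) (N : Submodule ℂ M) : Prop :=
  ∀ b : WIdx, ∀ x ∈ N, ρ b x ∈ N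

/-- Simplicity: the module is nonzero and has no nonzero proper invariant subspaces. -/
def WSimple {M : Type*} [AddCommGroup M] [Module ℂ M]
    (ρ : WIdx → Module.End ℂ M) : Prop :=
  (∃ x : M, x ≠ 0) ∧ ∀ N : Submodule ℂ M, WInvariant ρ N → N = ⊥ ∨ N = ⊤

/-- Module homomorphisms: linear maps intertwining the two actions. -/
def WHom {M N : Type*} [AddCommGroup M] [Module ℂ M] [AddCommGroup N] [Module ℂ N]
    (ρM : WIdx → Module.End ℂ M) (ρN : WIdx → Module.End ℂ N) (φ : M →ₗ[ℂ] N) : Prop :=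
  ∀ b : WIdx, ∀ x : M, φ (ρM b x) = ρN b (φ x)

/-- Restricted module: every vector is killed by `L n` and `W n` for all sufficiently large `n`. -/
def WRestricted {M : Type*} [AddCommGroup M] [Module ℂ M]
    (ρ : WIdx → Module.End ℂ M) : Prop :=
  ∀ x : M, ∃ N : ℤ, ∀ n : ℤ, N ≤ n → ρ (.L n) x = 0 ∧ ρ (.W n) x = 0

/-- The substitution operator f(s) ↦ f(s − n) on ℂ[s]. -/
noncomputable def shiftMap (n : ℤ) : Module.End ℂ (Polynomial ℂ) :=
  (Polynomial.aeval (Polynomial.X - Polynomial.C (n : ℂ))).toLinearMap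

/-- The action of W(2,2) on Ω(λ,α) = ℂ[s]:
`L n · f(s) = λⁿ (s − nα) f(s − n)`, `W n` and `C` act by zero. -/
noncomputable def omegaRho (lam alpha : ℂ) : WIdx → Module.End ℂ (Polynomial ℂ)
  | .L n => (lam ^ n) •
      ((LinearMap.mulLeft ℂ (Polynomial.X - Polynomial.C ((n : ℂ) * alpha))) ∘ₗ shiftMap n)
  | .W _ => 0
  | .C => 0

/-- g(t) = (h(t) − h(α))/(t − α) as an exact polynomial quotient. -/
noncomputable def gPoly (alpha : ℂ) (h : Polynomial ℂ) : Polynomial ℂ :=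
  (h - Polynomial.C (h.eval alpha)) /ₘ (Polynomial.X - Polynomial.C alpha)

/-- F(f) = g·f − f′. -/
noncomputable def Fmap (alpha : ℂ) (h : Polynomial ℂ) : Module.End ℂ (Polynomial ℂ) :=
  LinearMap.mulLeft ℂ (gPoly alpha h) - (Polynomial.derivative : Polynomial ℂ →ₗ[ℂ] Polynomial ℂ)

/-- G(f) = t·F(f) + h(α)·f. -/
noncomputable def Gmap (alpha : ℂ) (h : Polynomial ℂ) : Module.End ℂ (Polynomial ℂ) :=
  (LinearMap.mulLeft ℂ (Polynomial.X : Polynomial ℂ)) ∘ₗ Fmap alpha h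
    + (h.eval alpha) • (LinearMap.id : Polynomial ℂ →ₗ[ℂ] Polynomial ℂ)

/-- The action of W(2,2) on Ω(λ,α,h) = ℂ[s,t], realized as ℂ[s] ⊗ ℂ[t]:
`L n·(s^p t^q) = λⁿ(s−n)^p (s t^q + n G(t^q) − n²α F(t^q))`,
`W n·(s^p t^q) = λⁿ(t−nα)(s−n)^p t^q`, `C` acts by zero. -/
noncomputable def omegaHRho (lam alpha : ℂ) (h : Polynomial ℂ) :
    WIdx → Module.End ℂ (TensorProduct ℂ (Polynomial ℂ) (Polynomial ℂ))
  | .L n => (lam ^ n) •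
      (TensorProduct.map ((LinearMap.mulLeft ℂ (Polynomial.X : Polynomial ℂ)) ∘ₗ shiftMap n) LinearMap.id
        + (n : ℂ) • TensorProduct.map (shiftMap n) (Gmap alpha h)
        - ((n : ℂ)^2 * alpha) • TensorProduct.map (shiftMap n) (Fmap alpha h))
  | .W n => (lam ^ n) •
      TensorProduct.map (shiftMap n)
        (LinearMap.mulLeft ℂ (Polynomial.X - Polynomial.C ((n : ℂ) * alpha)))
  | .C => 0
/-- Variables s₁,…,s_m (left) and t₁,…,t_m (right). -/
abbrev WVars (m : ℕ) := Fin m ⊕ Fin m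

/-- Linear map on multivariate polynomials defined by its values on monomials. -/
noncomputable def mkLin {σ : Type*} {M : Type*} [AddCommGroup M] [Module ℂ M]
    (φ : (σ →₀ ℕ) → M) : MvPolynomial σ ℂ →ₗ[ℂ] M :=
  ((MvPolynomial.basisMonomials σ ℂ).constr ℂ) φ

/-- The part of the monomial `d` in the variables other than s_k, t_k. -/
noncomputable def others {m : ℕ} (k : Fin m) (d : WVars m →₀ ℕ) : MvPolynomial (WVars m) ℂ :=
  MvPolynomial.monomial ((d.erase (Sum.inl k)).erase (Sum.inr k)) 1

/-- Action of `W n` on the k-th tensor factor Ω(λ_k,α_k,h_k) inside ℂ[s₁,…,s_m,t₁,…,t_m]. -/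
noncomputable def siteW {m : ℕ} (lam alpha : Fin m → ℂ) (n : ℤ) (k : Fin m) :
    Module.End ℂ (MvPolynomial (WVars m) ℂ) :=
  mkLin fun d => (lam k ^ n) •
    ((MvPolynomial.X (Sum.inr k) - MvPolynomial.C ((n : ℂ) * alpha k)) *
      (MvPolynomial.X (Sum.inl k) - MvPolynomial.C (n : ℂ)) ^ (d (Sum.inl k)) *
      MvPolynomial.X (Sum.inr k) ^ (d (Sum.inr k)) * others k d)

/-- Action of `L n` on the k-th tensor factor Ω(λ_k,α_k,h_k) inside ℂ[s₁,…,s_m,t₁,…,t_m]. -/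
noncomputable def siteL {m : ℕ} (lam alpha : Fin m → ℂ) (h : Fin m → Polynomial ℂ)
    (n : ℤ) (k : Fin m) : Module.End ℂ (MvPolynomial (WVars m) ℂ) :=
  mkLin fun d => (lam k ^ n) •
    ((MvPolynomial.X (Sum.inl k) - MvPolynomial.C (n : ℂ)) ^ (d (Sum.inl k)) * others k d *
      (MvPolynomial.X (Sum.inl k) * MvPolynomial.X (Sum.inr k) ^ (d (Sum.inr k))
        + (n : ℂ) • Polynomial.aeval (MvPolynomial.X (Sum.inr k) : MvPolynomial (WVars m) ℂ)
            (Gmap (alpha k) (h k) (Polynomial.X ^ (d (Sum.inr k))))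
        - ((n : ℂ)^2 * alpha k) • Polynomial.aeval (MvPolynomial.X (Sum.inr k) : MvPolynomial (WVars m) ℂ)
            (Fmap (alpha k) (h k) (Polynomial.X ^ (d (Sum.inr k))))))

/-- The diagonal action of W(2,2) on the tensor product module
T = Ω(λ₁,α₁,h₁) ⊗ ⋯ ⊗ Ω(λ_m,α_m,h_m) ⊗ V, with the polynomial factors realized as
ℂ[s₁,…,s_m,t₁,…,t_m] and `ρV` the action on `V`. -/
noncomputable def bigRho {m : ℕ} {V : Type*} [AddCommGroup V] [Module ℂ V]
    (lam alpha : Fin m → ℂ) (h : Fin m → Polynomial ℂ) (ρV : WIdx → Module.End ℂ V) :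
    WIdx → Module.End ℂ (TensorProduct ℂ (MvPolynomial (WVars m) ℂ) V)
  | .L n => (∑ k : Fin m, TensorProduct.map (siteL lam alpha h n k) LinearMap.id)
      + TensorProduct.map LinearMap.id (ρV (.L n))
  | .W n => (∑ k : Fin m, TensorProduct.map (siteW lam alpha n k) LinearMap.id)
      + TensorProduct.map LinearMap.id (ρV (.W n))
  | .C => TensorProduct.map LinearMap.id (ρV .C)

/-- Carrier of the tensor product module T = Ω(λ₁,α₁,h₁) ⊗ ⋯ ⊗ Ω(λ_m,α_m,h_m) ⊗ V. -/
abbrev TMod (m : ℕ) (V : Type*) [AddCommGroup V] [Module ℂ V] :=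
  TensorProduct ℂ (MvPolynomial (WVars m) ℂ) V

-- ===== auxiliary lemmas =====

/-- The operator p(X) ↦ ν·p(X+1) − μ·p(X). -/
noncomputable def Aop (mu nu : ℂ) (p : Polynomial ℂ) : Polynomial ℂ :=
  nu • (p.comp (X + C 1)) - mu • p

lemma natDegree_comp_X_add_one (p : Polynomial ℂ) :
    (p.comp (X + C 1)).natDegree = p.natDegree := by
  rw [Polynomial.natDegree_comp, Polynomial.natDegree_X_add_C, mul_one]

lemma coeff_comp_top {p : Polynomial ℂ} {d : ℕ} (hd : p.natDegree ≤ d) :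
    (p.comp (X + C 1)).coeff d = p.coeff d := by
  rcases eq_or_lt_of_le hd with h | h
  · have h1 : (p.comp (X + C 1)).natDegree = p.natDegree := natDegree_comp_X_add_one p
    have hl : (p.comp (X + C 1)).leadingCoeff = p.leadingCoeff := by
      rw [Polynomial.leadingCoeff_comp
        (by rw [Polynomial.natDegree_X_add_C]; exact one_ne_zero)]
      rw [(Polynomial.monic_X_add_C (1:ℂ)).leadingCoeff, one_pow, mul_one]
    rw [← h]
    rw [show p.coeff p.natDegree = p.leadingCoeff from rfl, ← hl,
      Polynomial.leadingCoeff, h1]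
  · rw [Polynomial.coeff_eq_zero_of_natDegree_lt (by rwa [natDegree_comp_X_add_one]),
      Polynomial.coeff_eq_zero_of_natDegree_lt h]

lemma Aop_same_natDegree_le {mu : ℂ} {p : Polynomial ℂ} {d : ℕ} (hd : p.natDegree ≤ d + 1) :
    (Aop mu mu p).natDegree ≤ d := by
  rw [Polynomial.natDegree_le_iff_coeff_eq_zero]
  intro N hN
  have hN1 : d + 1 ≤ N := hN
  unfold Aop
  rw [Polynomial.coeff_sub, Polynomial.coeff_smul, Polynomial.coeff_smul]
  rcases eq_or_lt_of_le hN1 with h | h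
  · rw [coeff_comp_top (h ▸ hd)]; ring
  · have h1 : p.natDegree < N := lt_of_le_of_lt hd h
    have h2 : (p.comp (X + C 1)).natDegree < N := by rwa [natDegree_comp_X_add_one]
    rw [Polynomial.coeff_eq_zero_of_natDegree_lt h1,
      Polynomial.coeff_eq_zero_of_natDegree_lt h2]; ring

lemma Aop_same_iterate {mu : ℂ} {p : Polynomial ℂ} {d : ℕ} (hd : p.natDegree ≤ d) :
    (Aop mu mu)^[d + 1] p = 0 := by
  induction d generalizing p with
  | zero =>
      have hp : p = C (p.coeff 0) := Polynomial.eq_C_of_natDegree_le_zero hd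
      rw [Function.iterate_one, hp]
      unfold Aop; simp
  | succ d ih =>
      rw [Function.iterate_succ_apply]
      exact ih (Aop_same_natDegree_le hd)

lemma Aop_inj {mu nu : ℂ} (hne : nu ≠ mu) {p : Polynomial ℂ} (h : Aop mu nu p = 0) : p = 0 := by
  by_contra hp
  have hc : (Aop mu nu p).coeff p.natDegree = (nu - mu) * p.leadingCoeff := by
    unfold Aop
    rw [Polynomial.coeff_sub, Polynomial.coeff_smul, Polynomial.coeff_smul,
      coeff_comp_top le_rfl, smul_eq_mul, smul_eq_mul]
    rw [show p.coeff p.natDegree = p.leadingCoeff from rfl]; ring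
  rw [h, Polynomial.coeff_zero] at hc
  have := (mul_eq_zero.mp hc.symm)
  rcases this with h1 | h2
  · exact hne (by linear_combination h1)
  · exact hp (Polynomial.leadingCoeff_eq_zero.mp h2)

lemma Aop_iterate_inj {mu nu : ℂ} (hne : nu ≠ mu) {p : Polynomial ℂ} {j : ℕ}
    (h : (Aop mu nu)^[j] p = 0) : p = 0 := by
  induction j generalizing p with
  | zero => simpa using h
  | succ j ih =>
      rw [Function.iterate_succ_apply] at h
      exact Aop_inj hne (ih h)

lemma eval_Aop (mu nu : ℂ) (p : Polynomial ℂ) (x : ℂ) :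
    (Aop mu nu p).eval x = nu * p.eval (x + 1) - mu * p.eval x := by
  unfold Aop
  rw [Polynomial.eval_sub, Polynomial.eval_smul, Polynomial.eval_smul, Polynomial.eval_comp]
  simp [smul_eq_mul]

/-- Scalar exponential-polynomial independence. -/
lemma scalar_ep {ι : Type*} (s : Finset ι) (mu : ι → ℂ) (h0 : ∀ k ∈ s, mu k ≠ 0)
    (hinj : Set.InjOn mu s) (p : ι → Polynomial ℂ)
    (hrel : ∀ n : ℕ, ∑ k ∈ s, mu k ^ n * (p k).eval (n : ℂ) = 0) :
    ∀ k ∈ s, p k = 0 := by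
  classical
  induction s using Finset.induction_on generalizing p with
  | empty => intro k hk; simp at hk
  | @insert a t ha ih =>
      have h0a : mu a ≠ 0 := h0 a (Finset.mem_insert_self a t)
      have key : ∀ (j : ℕ) (n : ℕ),
          ∑ k ∈ insert a t, mu k ^ n * ((Aop (mu a) (mu k))^[j] (p k)).eval (n : ℂ) = 0 := by
        intro j
        induction j with
        | zero => simpa using hrel
        | succ j ihj =>
            intro n
            have e1 := ihj (n + 1)
            have e2 := ihj n
            calc ∑ k ∈ insert a t, mu k ^ n * ((Aop (mu a) (mu k))^[j+1] (p k)).eval (n : ℂ)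
                = ∑ k ∈ insert a t, (mu k ^ (n+1) * ((Aop (mu a) (mu k))^[j] (p k)).eval ((n:ℂ) + 1)
                    - mu a * (mu k ^ n * ((Aop (mu a) (mu k))^[j] (p k)).eval (n : ℂ))) := by
                  apply Finset.sum_congr rfl
                  intro k _
                  rw [Function.iterate_succ_apply', eval_Aop]
                  ring
              _ = 0 := by
                  rw [Finset.sum_sub_distrib, ← Finset.mul_sum, e2, mul_zero, sub_zero]
                  rw [show ((n:ℂ) + 1) = ((n + 1 : ℕ) : ℂ) by push_cast; ring]
                  exact e1
      set d : ℕ := (p a).natDegree + 1 with hd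
      have hkill : (Aop (mu a) (mu a))^[d] (p a) = 0 := Aop_same_iterate le_rfl
      have hrel_t : ∀ n : ℕ,
          ∑ k ∈ t, mu k ^ n * ((Aop (mu a) (mu k))^[d] (p k)).eval (n : ℂ) = 0 := by
        intro n
        have := key d n
        rwa [Finset.sum_insert ha, hkill, Polynomial.eval_zero, mul_zero, zero_add] at this
      have ht0 : ∀ k ∈ t, mu k ≠ 0 := fun k hk => h0 k (Finset.mem_insert_of_mem hk)
      have htinj : Set.InjOn mu t := hinj.mono (fun x hx => Finset.mem_insert_of_mem hx)
      have hzero_t : ∀ k ∈ t, p k = 0 := by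
        intro k hk
        have hiter := ih ht0 htinj _ hrel_t k hk
        have hne : mu k ≠ mu a := by
          intro he
          exact ha (by
            have : k = a := hinj (Finset.mem_insert_of_mem hk) (Finset.mem_insert_self a t) he
            exact this ▸ hk)
        exact Aop_iterate_inj hne hiter
      intro k hk
      rcases Finset.mem_insert.mp hk with rfl | hkt
      · -- show p a = 0 using remaining relation
        have heval : ∀ n : ℕ, (p k).eval (n : ℂ) = 0 := by
          intro n
          have := hrel n
          rw [Finset.sum_insert ha] at this
          have hz : ∑ x ∈ t, mu x ^ n * (p x).eval (n : ℂ) = 0 := by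
            apply Finset.sum_eq_zero
            intro x hx
            rw [hzero_t x hx, Polynomial.eval_zero, mul_zero]
          rw [hz, add_zero] at this
          exact (mul_eq_zero.mp this).resolve_left (pow_ne_zero n h0a)
        apply Polynomial.eq_zero_of_infinite_isRoot
        apply Set.infinite_of_injective_forall_mem (f := fun n : ℕ => (n : ℂ))
        · exact fun a b hab => Nat.cast_injective hab
        · exact fun n => heval n
      · exact hzero_t k hkt


lemma comp_X_add_C_inj {q : Polynomial ℂ} {a : ℂ} (h : q.comp (X + C a) = 0) : q = 0 := by
  apply Polynomial.funext
  intro r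
  have := congrArg (Polynomial.eval (r - a)) h
  rw [Polynomial.eval_comp] at this
  simpa using this

/-- Extraction of coefficients of exponential-polynomial families of vectors lying in a
submodule. -/
lemma extract_mem {W : Type*} [AddCommGroup W] [Module ℂ W] (Q : Submodule ℂ W)
    {ι : Type*} (s : Finset ι) (mu : ι → ℂ) (h0 : ∀ k ∈ s, mu k ≠ 0) (hinj : Set.InjOn mu s)
    (D : ℕ) (w : ι → ℕ → W) (N₀ : ℤ)
    (hf : ∀ n : ℤ, N₀ ≤ n →
      (∑ k ∈ s, ∑ j ∈ Finset.range D, (mu k ^ n * (n : ℂ) ^ j) • w k j) ∈ Q) :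
    ∀ k ∈ s, ∀ j ∈ Finset.range D, w k j ∈ Q := by
  classical
  set π := Q.mkQ with hπ
  set u : ι → ℕ → (W ⧸ Q) := fun k j => π (w k j) with hu
  have hrelvec : ∀ n : ℕ,
      ∑ k ∈ s, ∑ j ∈ Finset.range D,
        (mu k ^ (N₀ + (n : ℤ)) * (((N₀ + (n : ℤ) : ℤ)) : ℂ) ^ j) • u k j = 0 := by
    intro n
    have hmem := hf (N₀ + n) (by omega)
    have h1 : π (∑ k ∈ s, ∑ j ∈ Finset.range D,
        (mu k ^ (N₀ + (n:ℤ)) * ((N₀ + (n:ℤ) : ℤ) : ℂ) ^ j) • w k j) = 0 := by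
      rw [hπ]
      exact (Submodule.Quotient.mk_eq_zero Q).mpr hmem
    simp only [map_sum, map_smul] at h1
    exact h1
  -- reduce to scalar relations via coordinates
  have huzero : ∀ k ∈ s, ∀ j ∈ Finset.range D, u k j = 0 := by
    intro k hk j hj
    set b := Module.Basis.ofVectorSpace ℂ (W ⧸ Q) with hb
    have hcoord : ∀ i, b.repr (u k j) i = 0 := by
      intro i
      set φ : (W ⧸ Q) →ₗ[ℂ] ℂ := b.coord i with hφ
      set p : ι → Polynomial ℂ := fun k' =>
        Polynomial.C (mu k' ^ N₀) *
          ∑ j' ∈ Finset.range D, Polynomial.C (φ (u k' j')) * (X + C (N₀ : ℂ)) ^ j' with hp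
      have hrel : ∀ n : ℕ, ∑ k' ∈ s, mu k' ^ n * (p k').eval (n : ℂ) = 0 := by
        intro n
        have := congrArg φ (hrelvec n)
        rw [map_sum, map_zero] at this
        rw [← this]
        apply Finset.sum_congr rfl
        intro k' hk'
        rw [map_sum]
        simp only [map_smul, smul_eq_mul, hp]
        rw [Polynomial.eval_mul, Polynomial.eval_C, Polynomial.eval_finset_sum,
          Finset.mul_sum, Finset.mul_sum]
        apply Finset.sum_congr rfl
        intro j' hj'
        rw [Polynomial.eval_mul, Polynomial.eval_C, Polynomial.eval_pow,
          Polynomial.eval_add, Polynomial.eval_X, Polynomial.eval_C]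
        rw [zpow_add₀ (h0 k' hk'), zpow_natCast]
        push_cast
        ring
      have hp0 : p k = 0 := scalar_ep s mu h0 hinj p hrel k hk
      have hsum0 : ∑ j' ∈ Finset.range D, Polynomial.C (φ (u k j')) * (X + C (N₀ : ℂ)) ^ j' = 0 := by
        have hC : (Polynomial.C (mu k ^ N₀) : Polynomial ℂ) ≠ 0 := by
          simp only [ne_eq, Polynomial.C_eq_zero]
          exact zpow_ne_zero N₀ (h0 k hk)
        rcases mul_eq_zero.mp (hp ▸ hp0) with h | h
        · exact absurd h hC
        · exact h
      -- rewrite as a composition and use injectivity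
      have hcomp : (∑ j' ∈ Finset.range D, Polynomial.C (φ (u k j')) * X ^ j').comp
          (X + C (N₀ : ℂ)) = 0 := by
        rw [← hsum0]
        rw [Polynomial.sum_comp]
        apply Finset.sum_congr rfl
        intro j' _
        rw [Polynomial.mul_comp, Polynomial.C_comp, Polynomial.pow_comp, Polynomial.X_comp]
      have hq0 : (∑ j' ∈ Finset.range D, Polynomial.C (φ (u k j')) * X ^ j') = 0 :=
        comp_X_add_C_inj hcomp
      have := congrArg (fun q => Polynomial.coeff q j) hq0
      simp only [Polynomial.finset_sum_coeff, Polynomial.coeff_C_mul, Polynomial.coeff_X_pow,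
        Polynomial.coeff_zero] at this
      rw [Finset.sum_eq_single j] at this
      · have h' : φ (u k j) = 0 := by simpa using this
        exact h'
      · intro b' _ hb'
        rw [if_neg (fun h : j = b' => hb' h.symm), mul_zero]
      · intro hjn; exact absurd hj hjn
    have : b.repr (u k j) = 0 := by
      ext i; simpa using hcoord i
    exact b.repr.map_eq_zero_iff.mp this
  intro k hk j hj
  have := huzero k hk j hj
  rw [hu] at this
  exact (Submodule.Quotient.mk_eq_zero Q).mp this



lemma mkLin_monomial {σ : Type*} {M : Type*} [AddCommGroup M] [Module ℂ M]
    (φ : (σ →₀ ℕ) → M) (d : σ →₀ ℕ) :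
    mkLin φ (MvPolynomial.monomial d 1) = φ d := by
  have hb : (MvPolynomial.monomial d (1:ℂ)) = (MvPolynomial.basisMonomials σ ℂ) d := by
    simp [MvPolynomial.coe_basisMonomials]
  rw [hb, mkLin, Module.Basis.constr_basis]

/-- Evaluation of a polynomial over `MvPolynomial` at a constant, as a ℂ-linear map. -/
noncomputable def evalCmap {m : ℕ} (n : ℂ) :
    Polynomial (MvPolynomial (WVars m) ℂ) →ₗ[ℂ] MvPolynomial (WVars m) ℂ where
  toFun P := P.eval (MvPolynomial.C n)
  map_add' P Q := by simp
  map_smul' c P := by simp [Polynomial.eval_smul]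

@[simp] lemma evalCmap_apply {m : ℕ} (n : ℂ) (P : Polynomial (MvPolynomial (WVars m) ℂ)) :
    evalCmap n P = P.eval (MvPolynomial.C n) := rfl

/-- Constant coefficient, as a ℂ-linear map. -/
noncomputable def coeff0map {m : ℕ} :
    Polynomial (MvPolynomial (WVars m) ℂ) →ₗ[ℂ] MvPolynomial (WVars m) ℂ where
  toFun P := P.coeff 0
  map_add' P Q := by simp
  map_smul' c P := by simp [Polynomial.coeff_smul]

@[simp] lemma coeff0map_apply {m : ℕ} (P : Polynomial (MvPolynomial (WVars m) ℂ)) :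
    coeff0map P = P.coeff 0 := rfl

noncomputable def genWcore {m : ℕ} (alpha : Fin m → ℂ) (k : Fin m) (d : WVars m →₀ ℕ) :
    Polynomial (MvPolynomial (WVars m) ℂ) :=
  (Polynomial.C (MvPolynomial.X (Sum.inr k)) -
      Polynomial.X * Polynomial.C (MvPolynomial.C (alpha k))) *
    (Polynomial.C (MvPolynomial.X (Sum.inl k)) - Polynomial.X) ^ (d (Sum.inl k)) *
    Polynomial.C (MvPolynomial.X (Sum.inr k) ^ (d (Sum.inr k)) * others k d)

noncomputable def genW {m : ℕ} (alpha : Fin m → ℂ) (k : Fin m) :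
    MvPolynomial (WVars m) ℂ →ₗ[ℂ] Polynomial (MvPolynomial (WVars m) ℂ) :=
  mkLin (genWcore alpha k)

noncomputable def genLcore {m : ℕ} (alpha : Fin m → ℂ) (h : Fin m → Polynomial ℂ)
    (k : Fin m) (d : WVars m →₀ ℕ) : Polynomial (MvPolynomial (WVars m) ℂ) :=
  (Polynomial.C (MvPolynomial.X (Sum.inl k)) - Polynomial.X) ^ (d (Sum.inl k)) *
    Polynomial.C (others k d) *
    (Polynomial.C (MvPolynomial.X (Sum.inl k) * MvPolynomial.X (Sum.inr k) ^ (d (Sum.inr k)))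
      + Polynomial.X * Polynomial.C (Polynomial.aeval
          (MvPolynomial.X (Sum.inr k) : MvPolynomial (WVars m) ℂ)
          (Gmap (alpha k) (h k) (Polynomial.X ^ (d (Sum.inr k)))))
      - Polynomial.X ^ 2 * Polynomial.C (alpha k • Polynomial.aeval
          (MvPolynomial.X (Sum.inr k) : MvPolynomial (WVars m) ℂ)
          (Fmap (alpha k) (h k) (Polynomial.X ^ (d (Sum.inr k))))))

noncomputable def genL {m : ℕ} (alpha : Fin m → ℂ) (h : Fin m → Polynomial ℂ) (k : Fin m) :
    MvPolynomial (WVars m) ℂ →ₗ[ℂ] Polynomial (MvPolynomial (WVars m) ℂ) :=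
  mkLin (genLcore alpha h k)

lemma siteW_eq {m : ℕ} (lam alpha : Fin m → ℂ) (n : ℤ) (k : Fin m)
    (q : MvPolynomial (WVars m) ℂ) :
    siteW lam alpha n k q
      = (lam k ^ n) • ((genW alpha k q).eval (MvPolynomial.C ((n : ℂ)))) := by
  have hmaps : siteW lam alpha n k
      = (lam k ^ n) • ((evalCmap ((n : ℂ))).comp (genW alpha k)) := by
    apply (MvPolynomial.basisMonomials (WVars m) ℂ).ext
    intro d
    have hb : (MvPolynomial.basisMonomials (WVars m) ℂ) d = MvPolynomial.monomial d 1 := by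
      simp [MvPolynomial.coe_basisMonomials]
    rw [hb, siteW, mkLin_monomial, LinearMap.smul_apply, LinearMap.comp_apply,
      genW, mkLin_monomial, evalCmap_apply]
    simp only [genWcore, Polynomial.eval_mul, Polynomial.eval_sub, Polynomial.eval_pow,
      Polynomial.eval_C, Polynomial.eval_X, map_mul]
    exact congrArg (lam k ^ n • ·) (by ring)
  have := LinearMap.congr_fun hmaps q
  simpa using this

lemma siteL_eq {m : ℕ} (lam alpha : Fin m → ℂ) (h : Fin m → Polynomial ℂ) (n : ℤ) (k : Fin m)
    (q : MvPolynomial (WVars m) ℂ) :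
    siteL lam alpha h n k q
      = (lam k ^ n) • ((genL alpha h k q).eval (MvPolynomial.C ((n : ℂ)))) := by
  have hmaps : siteL lam alpha h n k
      = (lam k ^ n) • ((evalCmap ((n : ℂ))).comp (genL alpha h k)) := by
    apply (MvPolynomial.basisMonomials (WVars m) ℂ).ext
    intro d
    have hb : (MvPolynomial.basisMonomials (WVars m) ℂ) d = MvPolynomial.monomial d 1 := by
      simp [MvPolynomial.coe_basisMonomials]
    rw [hb, siteL, mkLin_monomial, LinearMap.smul_apply, LinearMap.comp_apply,
      genL, mkLin_monomial, evalCmap_apply]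
    simp only [genLcore, Polynomial.eval_mul, Polynomial.eval_sub, Polynomial.eval_add,
      Polynomial.eval_pow, Polynomial.eval_C, Polynomial.eval_X, MvPolynomial.smul_eq_C_mul,
      map_mul, map_pow]
    ring
  have := LinearMap.congr_fun hmaps q
  simpa using this

lemma monomial_factor {m : ℕ} (k : Fin m) (d : WVars m →₀ ℕ) :
    (MvPolynomial.X (Sum.inl k) : MvPolynomial (WVars m) ℂ) ^ (d (Sum.inl k)) *
      ((MvPolynomial.X (Sum.inr k) : MvPolynomial (WVars m) ℂ) ^ (d (Sum.inr k)) * others k d)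
      = MvPolynomial.monomial d 1 := by
  rw [others, MvPolynomial.X_pow_eq_monomial, MvPolynomial.X_pow_eq_monomial,
    MvPolynomial.monomial_mul, MvPolynomial.monomial_mul]
  have h2 : ((d.erase (Sum.inl k)) (Sum.inr k)) = d (Sum.inr k) := by
    rw [Finsupp.erase_ne]; simp
  have h1 : (Finsupp.single (Sum.inr k) (d (Sum.inr k))) + ((d.erase (Sum.inl k)).erase (Sum.inr k))
      = d.erase (Sum.inl k) := by
    rw [← h2]; exact Finsupp.single_add_erase _ _
  have h0 : (Finsupp.single (Sum.inl k) (d (Sum.inl k))) + d.erase (Sum.inl k) = d :=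
    Finsupp.single_add_erase _ _
  rw [h1, h0, one_mul, one_mul]

lemma genW_coeff_zero {m : ℕ} (alpha : Fin m → ℂ) (k : Fin m) (q : MvPolynomial (WVars m) ℂ) :
    (genW alpha k q).coeff 0 = MvPolynomial.X (Sum.inr k) * q := by
  have hmaps : (coeff0map).comp (genW alpha k)
      = LinearMap.mulLeft ℂ (MvPolynomial.X (Sum.inr k)) := by
    apply (MvPolynomial.basisMonomials (WVars m) ℂ).ext
    intro d
    have hb : (MvPolynomial.basisMonomials (WVars m) ℂ) d = MvPolynomial.monomial d 1 := by
      simp [MvPolynomial.coe_basisMonomials]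
    rw [hb, LinearMap.comp_apply, genW, mkLin_monomial, coeff0map_apply,
      Polynomial.coeff_zero_eq_eval_zero, LinearMap.mulLeft_apply]
    simp only [genWcore, Polynomial.eval_mul, Polynomial.eval_sub, Polynomial.eval_pow,
      Polynomial.eval_C, Polynomial.eval_X]
    rw [← monomial_factor k d]
    ring
  have := LinearMap.congr_fun hmaps q
  simpa using this

lemma genL_coeff_zero {m : ℕ} (alpha : Fin m → ℂ) (h : Fin m → Polynomial ℂ) (k : Fin m)
    (q : MvPolynomial (WVars m) ℂ) :
    (genL alpha h k q).coeff 0 = MvPolynomial.X (Sum.inl k) * q := by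
  have hmaps : (coeff0map).comp (genL alpha h k)
      = LinearMap.mulLeft ℂ (MvPolynomial.X (Sum.inl k)) := by
    apply (MvPolynomial.basisMonomials (WVars m) ℂ).ext
    intro d
    have hb : (MvPolynomial.basisMonomials (WVars m) ℂ) d = MvPolynomial.monomial d 1 := by
      simp [MvPolynomial.coe_basisMonomials]
    rw [hb, LinearMap.comp_apply, genL, mkLin_monomial, coeff0map_apply,
      Polynomial.coeff_zero_eq_eval_zero, LinearMap.mulLeft_apply]
    simp only [genLcore, Polynomial.eval_mul, Polynomial.eval_sub, Polynomial.eval_add,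
      Polynomial.eval_pow, Polynomial.eval_C, Polynomial.eval_X]
    rw [← monomial_factor k d]
    ring
  have := LinearMap.congr_fun hmaps q
  simpa using this


/-- For pairwise distinct λ_k ∈ ℂ*, α_k ∈ ℂ*, and V a simple restricted W(2,2)-module,
the element 1 ⊗ ⋯ ⊗ 1 ⊗ v (v ≠ 0) generates T = ⊗_k Ω(λ_k,α_k,h_k) ⊗ V: any invariant
subspace containing it is all of T. -/
theorem one_tensor_v_generates {m : ℕ} {V : Type*} [AddCommGroup V] [Module ℂ V]
    (lam alpha : Fin m → ℂ) (h : Fin m → Polynomial ℂ)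
    (hlam : ∀ k, lam k ≠ 0) (hinj : Function.Injective lam) (halpha : ∀ k, alpha k ≠ 0)
    (R : WRep V) (hres : WRestricted R.ρ) (hsimp : WSimple R.ρ)
    (v : V) (hv : v ≠ 0)
    (N : Submodule ℂ (TMod m V))
    (hN : WInvariant (M := TMod m V) (bigRho lam alpha h R.ρ) N)
    (hmem : (1 : MvPolynomial (WVars m) ℂ) ⊗ₜ[ℂ] v ∈ N) :
    N = ⊤ := by
  classical
  obtain ⟨N₀, hN₀⟩ := hres v
  -- the subspace of polynomials q with q ⊗ v ∈ N
  have hstepW : ∀ q : MvPolynomial (WVars m) ℂ, q ⊗ₜ[ℂ] v ∈ N →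
      ∀ k : Fin m, (MvPolynomial.X (Sum.inr k) * q) ⊗ₜ[ℂ] v ∈ N := by
    intro q hq k
    set D : ℕ := (Finset.univ.sup fun k' => (genW alpha k' q).natDegree) + 1 with hD
    set w : Fin m → ℕ → TMod m V := fun k' j => ((genW alpha k' q).coeff j) ⊗ₜ[ℂ] v with hw
    have hsite : ∀ (n : ℤ) (k' : Fin m),
        (siteW lam alpha n k' q) ⊗ₜ[ℂ] v
          = ∑ j ∈ Finset.range D, (lam k' ^ n * ((n : ℤ) : ℂ) ^ j) • w k' j := by
      intro n k'
      have hdeg : (genW alpha k' q).natDegree < D := by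
        rw [hD]
        exact Nat.lt_succ_of_le
          (Finset.le_sup (f := fun k'' => (genW alpha k'' q).natDegree) (Finset.mem_univ k'))
      rw [siteW_eq, Polynomial.eval_eq_sum_range' hdeg, Finset.smul_sum,
        TensorProduct.sum_tmul]
      apply Finset.sum_congr rfl
      intro j _
      have hC : (genW alpha k' q).coeff j * (MvPolynomial.C ((n : ℂ))) ^ j
          = ((n : ℂ) ^ j) • (genW alpha k' q).coeff j := by
        rw [← map_pow, mul_comm, MvPolynomial.C_mul']
      rw [hC, smul_smul, ← TensorProduct.smul_tmul']
    have hf : ∀ n : ℤ, N₀ ≤ n →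
        (∑ k' ∈ Finset.univ, ∑ j ∈ Finset.range D,
          (lam k' ^ n * ((n : ℤ) : ℂ) ^ j) • w k' j) ∈ N := by
      intro n hn
      have hbig : (bigRho lam alpha h R.ρ (.W n)) (q ⊗ₜ[ℂ] v)
          = ∑ k' ∈ Finset.univ, ∑ j ∈ Finset.range D,
              (lam k' ^ n * ((n : ℤ) : ℂ) ^ j) • w k' j := by
        have hWV : R.ρ (.W n) v = 0 := (hN₀ n hn).2
        simp only [bigRho, LinearMap.add_apply, LinearMap.coe_sum, Finset.sum_apply,
          TensorProduct.map_tmul, LinearMap.id_coe, id_eq, hWV, TensorProduct.tmul_zero,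
          add_zero]
        apply Finset.sum_congr rfl
        intro k' _
        exact hsite n k'
      rw [← hbig]
      exact hN (.W n) _ hq
    have := extract_mem N Finset.univ lam (fun k' _ => hlam k') (hinj.injOn)
      D w N₀ hf k (Finset.mem_univ k) 0 (Finset.mem_range.mpr (Nat.succ_pos _))
    rw [hw] at this
    simp only [genW_coeff_zero] at this
    exact this
  have hstepL : ∀ q : MvPolynomial (WVars m) ℂ, q ⊗ₜ[ℂ] v ∈ N →
      ∀ k : Fin m, (MvPolynomial.X (Sum.inl k) * q) ⊗ₜ[ℂ] v ∈ N := by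
    intro q hq k
    set D : ℕ := (Finset.univ.sup fun k' => (genL alpha h k' q).natDegree) + 1 with hD
    set w : Fin m → ℕ → TMod m V := fun k' j => ((genL alpha h k' q).coeff j) ⊗ₜ[ℂ] v with hw
    have hsite : ∀ (n : ℤ) (k' : Fin m),
        (siteL lam alpha h n k' q) ⊗ₜ[ℂ] v
          = ∑ j ∈ Finset.range D, (lam k' ^ n * ((n : ℤ) : ℂ) ^ j) • w k' j := by
      intro n k'
      have hdeg : (genL alpha h k' q).natDegree < D := by
        rw [hD]
        exact Nat.lt_succ_of_le
          (Finset.le_sup (f := fun k'' => (genL alpha h k'' q).natDegree) (Finset.mem_univ k'))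
      rw [siteL_eq, Polynomial.eval_eq_sum_range' hdeg, Finset.smul_sum,
        TensorProduct.sum_tmul]
      apply Finset.sum_congr rfl
      intro j _
      have hC : (genL alpha h k' q).coeff j * (MvPolynomial.C ((n : ℂ))) ^ j
          = ((n : ℂ) ^ j) • (genL alpha h k' q).coeff j := by
        rw [← map_pow, mul_comm, MvPolynomial.C_mul']
      rw [hC, smul_smul, ← TensorProduct.smul_tmul']
    have hf : ∀ n : ℤ, N₀ ≤ n →
        (∑ k' ∈ Finset.univ, ∑ j ∈ Finset.range D,
          (lam k' ^ n * ((n : ℤ) : ℂ) ^ j) • w k' j) ∈ N := by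
      intro n hn
      have hbig : (bigRho lam alpha h R.ρ (.L n)) (q ⊗ₜ[ℂ] v)
          = ∑ k' ∈ Finset.univ, ∑ j ∈ Finset.range D,
              (lam k' ^ n * ((n : ℤ) : ℂ) ^ j) • w k' j := by
        have hLV : R.ρ (.L n) v = 0 := (hN₀ n hn).1
        simp only [bigRho, LinearMap.add_apply, LinearMap.coe_sum, Finset.sum_apply,
          TensorProduct.map_tmul, LinearMap.id_coe, id_eq, hLV, TensorProduct.tmul_zero,
          add_zero]
        apply Finset.sum_congr rfl
        intro k' _
        exact hsite n k'
      rw [← hbig]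
      exact hN (.L n) _ hq
    have := extract_mem N Finset.univ lam (fun k' _ => hlam k') (hinj.injOn)
      D w N₀ hf k (Finset.mem_univ k) 0 (Finset.mem_range.mpr (Nat.succ_pos _))
    rw [hw] at this
    simp only [genL_coeff_zero] at this
    exact this
  -- all polynomials tensor v lie in N
  have hQtop : ∀ p : MvPolynomial (WVars m) ℂ, p ⊗ₜ[ℂ] v ∈ N := by
    intro p
    induction p using MvPolynomial.induction_on with
    | C a =>
        have : (MvPolynomial.C a : MvPolynomial (WVars m) ℂ) ⊗ₜ[ℂ] v
            = a • ((1 : MvPolynomial (WVars m) ℂ) ⊗ₜ[ℂ] v) := by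
          rw [TensorProduct.smul_tmul', MvPolynomial.smul_eq_C_mul, mul_one]
        rw [this]
        exact N.smul_mem a hmem
    | add p q hp hq =>
        rw [TensorProduct.add_tmul]
        exact N.add_mem hp hq
    | mul_X p i hp =>
        rw [mul_comm]
        cases i with
        | inl k => exact hstepL p hp k
        | inr k => exact hstepW p hp k
  -- the subspace U of V
  let U : Submodule ℂ V :=
    { carrier := {w | ∀ p : MvPolynomial (WVars m) ℂ, p ⊗ₜ[ℂ] w ∈ N}
      add_mem' := fun {a b} ha hb p => by
        rw [TensorProduct.tmul_add]; exact N.add_mem (ha p) (hb p)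
      zero_mem' := fun p => by rw [TensorProduct.tmul_zero]; exact N.zero_mem
      smul_mem' := fun c x hx p => by
        rw [TensorProduct.tmul_smul]; exact N.smul_mem c (hx p) }
  have hUmem : ∀ x : V, x ∈ U ↔ ∀ p : MvPolynomial (WVars m) ℂ, p ⊗ₜ[ℂ] x ∈ N :=
    fun x => Iff.rfl
  have hUinv : WInvariant R.ρ U := by
    intro b x hx
    rw [hUmem] at hx ⊢
    intro p
    cases b with
    | C =>
        have h1 := hN .C (p ⊗ₜ[ℂ] x) (hx p)
        simpa only [bigRho, TensorProduct.map_tmul, LinearMap.id_coe, id_eq] using h1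
    | L n =>
        have h1 := hN (.L n) (p ⊗ₜ[ℂ] x) (hx p)
        have h2 : (∑ k : Fin m, siteL lam alpha h n k p) ⊗ₜ[ℂ] x ∈ N := hx _
        have h3 : (bigRho lam alpha h R.ρ (.L n)) (p ⊗ₜ[ℂ] x)
            = (∑ k : Fin m, siteL lam alpha h n k p) ⊗ₜ[ℂ] x + p ⊗ₜ[ℂ] (R.ρ (.L n) x) := by
          simp only [bigRho, LinearMap.add_apply, LinearMap.coe_sum, Finset.sum_apply,
            TensorProduct.map_tmul, LinearMap.id_coe, id_eq, TensorProduct.sum_tmul]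
        have : p ⊗ₜ[ℂ] (R.ρ (.L n) x)
            = (bigRho lam alpha h R.ρ (.L n)) (p ⊗ₜ[ℂ] x)
              - (∑ k : Fin m, siteL lam alpha h n k p) ⊗ₜ[ℂ] x := by
          rw [h3]; abel
        rw [this]
        exact N.sub_mem h1 h2
    | W n =>
        have h1 := hN (.W n) (p ⊗ₜ[ℂ] x) (hx p)
        have h2 : (∑ k : Fin m, siteW lam alpha n k p) ⊗ₜ[ℂ] x ∈ N := hx _
        have h3 : (bigRho lam alpha h R.ρ (.W n)) (p ⊗ₜ[ℂ] x)
            = (∑ k : Fin m, siteW lam alpha n k p) ⊗ₜ[ℂ] x + p ⊗ₜ[ℂ] (R.ρ (.W n) x) := by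
          simp only [bigRho, LinearMap.add_apply, LinearMap.coe_sum, Finset.sum_apply,
            TensorProduct.map_tmul, LinearMap.id_coe, id_eq, TensorProduct.sum_tmul]
        have : p ⊗ₜ[ℂ] (R.ρ (.W n) x)
            = (bigRho lam alpha h R.ρ (.W n)) (p ⊗ₜ[ℂ] x)
              - (∑ k : Fin m, siteW lam alpha n k p) ⊗ₜ[ℂ] x := by
          rw [h3]; abel
        rw [this]
        exact N.sub_mem h1 h2
  have hvU : v ∈ U := hQtop
  have hUtop : U = ⊤ := by
    rcases hsimp.2 U hUinv with hbot | htop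
    · exfalso
      apply hv
      have : v ∈ (⊥ : Submodule ℂ V) := hbot ▸ hvU
      simpa using this
    · exact htop
  -- conclude N = ⊤
  rw [Submodule.eq_top_iff']
  intro x
  induction x using TensorProduct.induction_on with
  | zero => exact N.zero_mem
  | tmul p y =>
      have hy : y ∈ U := hUtop ▸ Submodule.mem_top
      exact hy p
  | add a b ha hb => exact N.add_mem ha hb
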